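/- Let X, Y : E → E be C¹ vector fields (ContDiff ℝ 1) such that X has compact support (HasCompactSupport X). Then ∫ ⟪curl X (x), Y x⟫ dx = ∫ ⟪X x, curl Y (x)⟫ dx, where the integrals are taken with respect to the volume measure on E. (Self-adjointness of the vorticity operator rot on vector fields, which gives the symmetry of the bilinear form ⟨X,Y⟩ = ∫ g(X, rot⁻¹Y) dμ of the paper.) -/

import Mathlib

open MeasureTheory RealInnerProductSpace

noncomputable section

abbrev E : Type := EuclideanSpace ℝ (Fin 3)

/-- The `i`-th standard basis vector of `E`. -/
def e (i : Fin 3) : E := EuclideanSpace.single i 1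

/-- The curl (vorticity) of a vector field on `E`. -/
def curl (X : E → E) (x : E) : E :=
  (WithLp.equiv 2 (Fin 3 → ℝ)).symm
    ![fderiv ℝ X x (e 1) 2 - fderiv ℝ X x (e 2) 1,
      fderiv ℝ X x (e 2) 0 - fderiv ℝ X x (e 0) 2,
      fderiv ℝ X x (e 0) 1 - fderiv ℝ X x (e 1) 0]

/-- The divergence of a vector field on `E`. -/
def div (X : E → E) (x : E) : ℝ := ∑ i, fderiv ℝ X x (e i) i

/-- The cross product on `E`. -/
def cross (a b : E) : E :=
  (WithLp.equiv 2 (Fin 3 → ℝ)).symm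
    ![a 1 * b 2 - a 2 * b 1,
      a 2 * b 0 - a 0 * b 2,
      a 0 * b 1 - a 1 * b 0]

infixl:74 " ×₃ " => cross

theorem ibp_aux (f g : E → ℝ) (hf : ContDiff ℝ 1 f) (hg : ContDiff ℝ 1 g)
    (hsupp : HasCompactSupport f) (v : E) :
    ∫ x, fderiv ℝ f x v * g x ∂(volume : Measure E)
      = - ∫ x, f x * fderiv ℝ g x v ∂(volume : Measure E) := by
  have h1 : Integrable (fun x ↦ fderiv ℝ f x v * g x) (volume : Measure E) := by
    apply Continuous.integrable_of_hasCompactSupport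
    · exact ((hf.continuous_fderiv one_ne_zero).clm_apply continuous_const).mul hg.continuous
    · exact ((hsupp.fderiv (𝕜 := ℝ)).comp_left (g := fun L : E →L[ℝ] ℝ => L v) rfl).mul_right
  have h2 : Integrable (fun x ↦ f x * fderiv ℝ g x v) (volume : Measure E) := by
    apply Continuous.integrable_of_hasCompactSupport
    · exact hf.continuous.mul ((hg.continuous_fderiv one_ne_zero).clm_apply continuous_const)
    · exact hsupp.mul_right
  have h3 : Integrable (fun x ↦ f x * g x) (volume : Measure E) :=
    (hf.continuous.mul hg.continuous).integrable_of_hasCompactSupport hsupp.mul_right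
  have h := integral_mul_fderiv_eq_neg_fderiv_mul_of_integrable h1 h2 h3
    (fun x _ => hf.differentiable one_ne_zero x) (fun x _ => hg.differentiable one_ne_zero x)
  linarith

theorem ibp_comp (X Y : E → E) (hX : ContDiff ℝ 1 X) (hY : ContDiff ℝ 1 Y)
    (hsupp : HasCompactSupport X) (i j k : Fin 3) :
    ∫ x, fderiv ℝ X x (e i) j * Y x k ∂(volume : Measure E)
      = - ∫ x, X x j * fderiv ℝ Y x (e i) k ∂(volume : Measure E) := by
  have hdX : ∀ x, fderiv ℝ (fun y => X y j) x (e i) = fderiv ℝ X x (e i) j := by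
    intro x
    have h := ((EuclideanSpace.proj (𝕜 := ℝ) j).hasFDerivAt.comp x
      ((hX.differentiable one_ne_zero) x).hasFDerivAt).fderiv
    have e1 : (fun y => X y j) = ⇑(EuclideanSpace.proj (𝕜 := ℝ) j) ∘ X := rfl
    rw [e1, h]; rfl
  have hdY : ∀ x, fderiv ℝ (fun y => Y y k) x (e i) = fderiv ℝ Y x (e i) k := by
    intro x
    have h := ((EuclideanSpace.proj (𝕜 := ℝ) k).hasFDerivAt.comp x
      ((hY.differentiable one_ne_zero) x).hasFDerivAt).fderiv
    have e1 : (fun y => Y y k) = ⇑(EuclideanSpace.proj (𝕜 := ℝ) k) ∘ Y := rfl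
    rw [e1, h]; rfl
  have := ibp_aux (fun x => X x j) (fun x => Y x k)
    ((EuclideanSpace.proj (𝕜 := ℝ) j).contDiff.comp hX)
    ((EuclideanSpace.proj (𝕜 := ℝ) k).contDiff.comp hY)
    (hsupp.comp_left (g := fun u : E => u j) rfl) (e i)
  simpa only [hdX, hdY] using this

/-- Self-adjointness of the vorticity operator `curl`:
`∫ ⟪curl X, Y⟫ = ∫ ⟪X, curl Y⟫` for `C¹` fields, `X` compactly supported. -/
theorem curl_selfAdjoint (X Y : E → E) (hX : ContDiff ℝ 1 X) (hY : ContDiff ℝ 1 Y)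
    (hsupp : HasCompactSupport X) :
    ∫ x, ⟪curl X x, Y x⟫ ∂(volume : Measure E)
      = ∫ x, ⟪X x, curl Y x⟫ ∂(volume : Measure E) := by
  have hI1 : ∀ i j k : Fin 3,
      Integrable (fun x => fderiv ℝ X x (e i) j * Y x k) (volume : Measure E) := by
    intro i j k
    apply Continuous.integrable_of_hasCompactSupport
    · exact ((EuclideanSpace.proj (𝕜 := ℝ) j).continuous.comp
        ((hX.continuous_fderiv one_ne_zero).clm_apply continuous_const)).mul
        ((EuclideanSpace.proj (𝕜 := ℝ) k).continuous.comp hY.continuous)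
    · exact ((hsupp.fderiv (𝕜 := ℝ)).comp_left
        (g := fun L : E →L[ℝ] E => L (e i) j) rfl).mul_right
  have hI2 : ∀ i j k : Fin 3,
      Integrable (fun x => X x j * fderiv ℝ Y x (e i) k) (volume : Measure E) := by
    intro i j k
    apply Continuous.integrable_of_hasCompactSupport
    · exact ((EuclideanSpace.proj (𝕜 := ℝ) j).continuous.comp hX.continuous).mul
        ((EuclideanSpace.proj (𝕜 := ℝ) k).continuous.comp
          ((hY.continuous_fderiv one_ne_zero).clm_apply continuous_const))
    · exact (hsupp.comp_left (g := fun u : E => u j) rfl).mul_right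
  have hL : ∫ x, ⟪curl X x, Y x⟫ ∂(volume : Measure E)
      = ∫ x, ((fderiv ℝ X x (e 1) 2 * Y x 0 - fderiv ℝ X x (e 2) 1 * Y x 0)
        + (fderiv ℝ X x (e 2) 0 * Y x 1 - fderiv ℝ X x (e 0) 2 * Y x 1)
        + (fderiv ℝ X x (e 0) 1 * Y x 2 - fderiv ℝ X x (e 1) 0 * Y x 2))
        ∂(volume : Measure E) := by
    congr 1; funext x
    simp [curl, PiLp.inner_apply, RCLike.inner_apply, conj_trivial, Fin.sum_univ_three,
      WithLp.equiv_symm_apply]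
    ring
  have hR : ∫ x, ⟪X x, curl Y x⟫ ∂(volume : Measure E)
      = ∫ x, ((X x 0 * fderiv ℝ Y x (e 1) 2 - X x 0 * fderiv ℝ Y x (e 2) 1)
        + (X x 1 * fderiv ℝ Y x (e 2) 0 - X x 1 * fderiv ℝ Y x (e 0) 2)
        + (X x 2 * fderiv ℝ Y x (e 0) 1 - X x 2 * fderiv ℝ Y x (e 1) 0))
        ∂(volume : Measure E) := by
    congr 1; funext x
    simp [curl, PiLp.inner_apply, RCLike.inner_apply, conj_trivial, Fin.sum_univ_three,
      WithLp.equiv_symm_apply]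
    ring
  rw [hL, hR]
  have A1 : Integrable (fun x => fderiv ℝ X x (e 1) 2 * Y x 0 - fderiv ℝ X x (e 2) 1 * Y x 0)
      (volume : Measure E) := (hI1 1 2 0).sub (hI1 2 1 0)
  have A2 : Integrable (fun x => fderiv ℝ X x (e 2) 0 * Y x 1 - fderiv ℝ X x (e 0) 2 * Y x 1)
      (volume : Measure E) := (hI1 2 0 1).sub (hI1 0 2 1)
  have A3 : Integrable (fun x => fderiv ℝ X x (e 0) 1 * Y x 2 - fderiv ℝ X x (e 1) 0 * Y x 2)
      (volume : Measure E) := (hI1 0 1 2).sub (hI1 1 0 2)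
  have B1 : Integrable (fun x => X x 0 * fderiv ℝ Y x (e 1) 2 - X x 0 * fderiv ℝ Y x (e 2) 1)
      (volume : Measure E) := (hI2 1 0 2).sub (hI2 2 0 1)
  have B2 : Integrable (fun x => X x 1 * fderiv ℝ Y x (e 2) 0 - X x 1 * fderiv ℝ Y x (e 0) 2)
      (volume : Measure E) := (hI2 2 1 0).sub (hI2 0 1 2)
  have B3 : Integrable (fun x => X x 2 * fderiv ℝ Y x (e 0) 1 - X x 2 * fderiv ℝ Y x (e 1) 0)
      (volume : Measure E) := (hI2 0 2 1).sub (hI2 1 2 0)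
  have A12 : Integrable (fun x => (fderiv ℝ X x (e 1) 2 * Y x 0 - fderiv ℝ X x (e 2) 1 * Y x 0)
      + (fderiv ℝ X x (e 2) 0 * Y x 1 - fderiv ℝ X x (e 0) 2 * Y x 1))
      (volume : Measure E) := A1.add A2
  have B12 : Integrable (fun x => (X x 0 * fderiv ℝ Y x (e 1) 2 - X x 0 * fderiv ℝ Y x (e 2) 1)
      + (X x 1 * fderiv ℝ Y x (e 2) 0 - X x 1 * fderiv ℝ Y x (e 0) 2))
      (volume : Measure E) := B1.add B2
  rw [integral_add A12 A3, integral_add A1 A2,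
    integral_sub (hI1 1 2 0) (hI1 2 1 0), integral_sub (hI1 2 0 1) (hI1 0 2 1),
    integral_sub (hI1 0 1 2) (hI1 1 0 2),
    integral_add B12 B3, integral_add B1 B2,
    integral_sub (hI2 1 0 2) (hI2 2 0 1), integral_sub (hI2 2 1 0) (hI2 0 1 2),
    integral_sub (hI2 0 2 1) (hI2 1 2 0)]
  have h1 := ibp_comp X Y hX hY hsupp 1 2 0
  have h2 := ibp_comp X Y hX hY hsupp 2 1 0
  have h3 := ibp_comp X Y hX hY hsupp 2 0 1
  have h4 := ibp_comp X Y hX hY hsupp 0 2 1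
  have h5 := ibp_comp X Y hX hY hsupp 0 1 2
  have h6 := ibp_comp X Y hX hY hsupp 1 0 2
  linarith
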